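/- The function h ↦ (sinh(2h) + sin(2h)) / (sinh(2h) - sin(2h)) tends to +∞ as h → 0⁺, and the function h ↦ (sinh(2h) - sin(2h)) / (sinh(2h) + sin(2h)) tends to 0 as h → 0⁺. Moreover both functions tend to 1 as h → ∞. -/

import Mathlib

open Filter

private lemma slope_lim_sin : Tendsto (fun x : ℝ => Real.sin x / x)
    (nhdsWithin 0 (Set.Ioi 0)) (nhds 1) := by
  have h := hasDerivAt_iff_tendsto_slope.mp (Real.hasDerivAt_sin 0)
  rw [Real.cos_zero] at h
  have h' := h.mono_left (nhdsWithin_mono _ (by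
    intro x hx
    simpa using (ne_of_gt (Set.mem_Ioi.mp hx))))
  refine h'.congr' ?_
  filter_upwards with x
  simp [slope_fun_def, Real.sin_zero, div_eq_inv_mul]

private lemma slope_lim_sinh : Tendsto (fun x : ℝ => Real.sinh x / x)
    (nhdsWithin 0 (Set.Ioi 0)) (nhds 1) := by
  have h := hasDerivAt_iff_tendsto_slope.mp (Real.hasDerivAt_sinh 0)
  rw [Real.cosh_zero] at h
  have h' := h.mono_left (nhdsWithin_mono _ (by
    intro x hx
    simpa using (ne_of_gt (Set.mem_Ioi.mp hx))))
  refine h'.congr' ?_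
  filter_upwards with x
  simp [slope_fun_def, Real.sinh_zero, div_eq_inv_mul]

private lemma two_mul_map : Tendsto (fun h : ℝ => 2 * h)
    (nhdsWithin 0 (Set.Ioi 0)) (nhdsWithin 0 (Set.Ioi 0)) := by
  apply tendsto_nhdsWithin_of_tendsto_nhds_of_eventually_within
  · have : Tendsto (fun h : ℝ => 2 * h) (nhds 0) (nhds (2 * 0)) :=
      ((continuous_const.mul continuous_id : Continuous fun h : ℝ => 2 * h)).tendsto 0
    rw [mul_zero] at this
    exact this.mono_left nhdsWithin_le_nhds
  · filter_upwards [self_mem_nhdsWithin] with h hh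
    exact Set.mem_Ioi.mpr (mul_pos two_pos (Set.mem_Ioi.mp hh))

private lemma g_lim_zero : Tendsto
    (fun h : ℝ => (Real.sinh (2 * h) - Real.sin (2 * h))
      / (Real.sinh (2 * h) + Real.sin (2 * h)))
    (nhdsWithin 0 (Set.Ioi 0)) (nhds 0) := by
  have A := slope_lim_sinh.comp two_mul_map
  have B := slope_lim_sin.comp two_mul_map
  have hmain := (A.sub B).div (A.add B) (by norm_num)
  have h0 : ((1 : ℝ) - 1) / (1 + 1) = 0 := by norm_num
  rw [h0] at hmain
  refine hmain.congr' ?_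
  filter_upwards [self_mem_nhdsWithin] with h hh
  have h2 : (2 : ℝ) * h ≠ 0 := ne_of_gt (mul_pos two_pos (Set.mem_Ioi.mp hh))
  simp only [Pi.div_apply, Function.comp]
  rw [div_sub_div_same, ← add_div, div_div_div_cancel_right₀ h2]

private lemma g_pos : ∀ᶠ h in nhdsWithin (0:ℝ) (Set.Ioi 0),
    0 < (Real.sinh (2 * h) - Real.sin (2 * h))
      / (Real.sinh (2 * h) + Real.sin (2 * h)) := by
  filter_upwards [self_mem_nhdsWithin] with h hh
  have hpos : 0 < 2 * h := mul_pos two_pos (Set.mem_Ioi.mp hh)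
  have hsin : Real.sin (2 * h) < 2 * h := Real.sin_lt hpos
  have hsinh : 2 * h < Real.sinh (2 * h) := Real.self_lt_sinh_iff.mpr hpos
  have habs : |Real.sin (2 * h)| ≤ |2 * h| := Real.abs_sin_le_abs
  rw [abs_of_pos hpos] at habs
  have hlb : -(2 * h) ≤ Real.sin (2 * h) := (abs_le.mp habs).1
  apply div_pos (by linarith) (by linarith)

private lemma sinh_two_mul_atTop : Tendsto (fun h : ℝ => Real.sinh (2 * h)) atTop atTop := by
  refine tendsto_atTop_mono' atTop (f₁ := fun h : ℝ => 2 * h) ?_ ?_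
  · filter_upwards [eventually_gt_atTop (0:ℝ)] with h hh
    exact le_of_lt (Real.self_lt_sinh_iff.mpr (mul_pos two_pos hh))
  · exact tendsto_id.const_mul_atTop two_pos

private lemma sin_div_sinh_atTop : Tendsto
    (fun h : ℝ => Real.sin (2 * h) / Real.sinh (2 * h)) atTop (nhds 0) := by
  have hinv : Tendsto (fun h : ℝ => (Real.sinh (2 * h))⁻¹) atTop (nhds 0) :=
    sinh_two_mul_atTop.inv_tendsto_atTop
  apply squeeze_zero_norm' _ hinv
  filter_upwards [sinh_two_mul_atTop.eventually_ge_atTop 1] with h hh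
  have h1 : (0:ℝ) < Real.sinh (2 * h) := lt_of_lt_of_le one_pos hh
  calc ‖Real.sin (2 * h) / Real.sinh (2 * h)‖
      = |Real.sin (2 * h)| / Real.sinh (2 * h) := by
        rw [norm_div, Real.norm_eq_abs, Real.norm_eq_abs, abs_of_pos h1]
    _ ≤ 1 / Real.sinh (2 * h) := by
        gcongr
        exact Real.abs_sin_le_one _
    _ = (Real.sinh (2 * h))⁻¹ := one_div _

private lemma ratio_eq (h : ℝ) (hne : Real.sinh (2 * h) ≠ 0) :
    (1 + Real.sin (2 * h) / Real.sinh (2 * h))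
      / (1 - Real.sin (2 * h) / Real.sinh (2 * h))
    = (Real.sinh (2 * h) + Real.sin (2 * h)) / (Real.sinh (2 * h) - Real.sin (2 * h)) := by
  have e1 : 1 + Real.sin (2 * h) / Real.sinh (2 * h)
      = (Real.sinh (2 * h) + Real.sin (2 * h)) / Real.sinh (2 * h) := by
    field_simp
  have e2 : 1 - Real.sin (2 * h) / Real.sinh (2 * h)
      = (Real.sinh (2 * h) - Real.sin (2 * h)) / Real.sinh (2 * h) := by
    field_simp
  rw [e1, e2, div_div_div_cancel_right₀ hne]

private lemma f_atTop : Tendsto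
    (fun h : ℝ => (Real.sinh (2 * h) + Real.sin (2 * h))
      / (Real.sinh (2 * h) - Real.sin (2 * h))) atTop (nhds 1) := by
  have ht := sin_div_sinh_atTop
  have hc : Tendsto (fun _ : ℝ => (1:ℝ)) atTop (nhds 1) := tendsto_const_nhds
  have hmain := (hc.add ht).div (hc.sub ht) (by norm_num : (1:ℝ) - 0 ≠ 0)
  have h0 : ((1:ℝ) + 0) / (1 - 0) = 1 := by norm_num
  rw [h0] at hmain
  refine hmain.congr' ?_
  filter_upwards [sinh_two_mul_atTop.eventually_ge_atTop 1] with h hh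
  have hne : Real.sinh (2 * h) ≠ 0 := by linarith
  simpa using ratio_eq h hne

private lemma g_atTop : Tendsto
    (fun h : ℝ => (Real.sinh (2 * h) - Real.sin (2 * h))
      / (Real.sinh (2 * h) + Real.sin (2 * h))) atTop (nhds 1) := by
  have ht := sin_div_sinh_atTop
  have hc : Tendsto (fun _ : ℝ => (1:ℝ)) atTop (nhds 1) := tendsto_const_nhds
  have hmain := (hc.sub ht).div (hc.add ht) (by norm_num : (1:ℝ) + 0 ≠ 0)
  have h0 : ((1:ℝ) - 0) / (1 + 0) = 1 := by norm_num
  rw [h0] at hmain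
  refine hmain.congr' ?_
  filter_upwards [sinh_two_mul_atTop.eventually_ge_atTop 1] with h hh
  have hne : Real.sinh (2 * h) ≠ 0 := by linarith
  have e1 : 1 - Real.sin (2 * h) / Real.sinh (2 * h)
      = (Real.sinh (2 * h) - Real.sin (2 * h)) / Real.sinh (2 * h) := by
    field_simp
  have e2 : 1 + Real.sin (2 * h) / Real.sinh (2 * h)
      = (Real.sinh (2 * h) + Real.sin (2 * h)) / Real.sinh (2 * h) := by
    field_simp
  simp only [Pi.div_apply]
  rw [e1, e2, div_div_div_cancel_right₀ hne]

theorem extreme_deflection_limits_in_h :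
    Filter.Tendsto
      (fun h : ℝ => (Real.sinh (2 * h) + Real.sin (2 * h))
        / (Real.sinh (2 * h) - Real.sin (2 * h)))
      (nhdsWithin 0 (Set.Ioi 0)) Filter.atTop ∧
    Filter.Tendsto
      (fun h : ℝ => (Real.sinh (2 * h) - Real.sin (2 * h))
        / (Real.sinh (2 * h) + Real.sin (2 * h)))
      (nhdsWithin 0 (Set.Ioi 0)) (nhds 0) ∧
    Filter.Tendsto
      (fun h : ℝ => (Real.sinh (2 * h) + Real.sin (2 * h))
        / (Real.sinh (2 * h) - Real.sin (2 * h)))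
      Filter.atTop (nhds 1) ∧
    Filter.Tendsto
      (fun h : ℝ => (Real.sinh (2 * h) - Real.sin (2 * h))
        / (Real.sinh (2 * h) + Real.sin (2 * h)))
      Filter.atTop (nhds 1) := by
  refine ⟨?_, g_lim_zero, f_atTop, g_atTop⟩
  have hg : Tendsto
      (fun h : ℝ => (Real.sinh (2 * h) - Real.sin (2 * h))
        / (Real.sinh (2 * h) + Real.sin (2 * h)))
      (nhdsWithin 0 (Set.Ioi 0)) (nhdsWithin 0 (Set.Ioi 0)) :=
    tendsto_nhdsWithin_of_tendsto_nhds_of_eventually_within _ g_lim_zero g_pos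
  have h2 := hg.inv_tendsto_nhdsGT_zero
  refine h2.congr fun h => ?_
  simp only [Pi.inv_apply, inv_div]
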